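/- Let Y = X + E be symmetric n×n real matrices, and let v be a unit eigenvector of Y whose eigenvalue λ satisfies |λ| = ‖Y‖_op > 5α, where ‖X‖_op ≤ α. Let Q ⊆ {1,…,n} be a set containing the support of all nonzero rows and columns of E, and let ṽ be v with all coordinates outside Q zeroed out. Then ‖ṽ‖₂² ≥ 1 − 2α/‖E‖_op ≥ 1/2. -/

import Mathlib

set_option synthInstance.maxHeartbeats 400000
set_option maxHeartbeats 800000

theorem top_eigenvector_mass_on_corruption (n : ℕ) (X E Y : Matrix (Fin n) (Fin n) ℝ)
    (hY : Y = X + E) (hXsymm : X.IsSymm) (hYsymm : Y.IsSymm)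
    (α : ℝ) (hX : ‖Matrix.toEuclideanCLM (𝕜 := ℝ) X‖ ≤ α)
    (v : EuclideanSpace ℝ (Fin n)) (hv : ‖v‖ = 1) (lam : ℝ)
    (heig : Matrix.toEuclideanCLM (𝕜 := ℝ) Y v = lam • v)
    (hlam : |lam| = ‖Matrix.toEuclideanCLM (𝕜 := ℝ) Y‖)
    (hbig : ‖Matrix.toEuclideanCLM (𝕜 := ℝ) Y‖ > 5 * α)
    (Q : Finset (Fin n)) (hQ : ∀ i j : Fin n, E i j ≠ 0 → i ∈ Q ∧ j ∈ Q)
    (vtil : EuclideanSpace ℝ (Fin n)) (hvtil : ∀ i, vtil i = if i ∈ Q then v i else 0) :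
    1 - 2 * α / ‖Matrix.toEuclideanCLM (𝕜 := ℝ) E‖ ≤ ‖vtil‖ ^ 2 ∧
    (1 : ℝ) / 2 ≤ 1 - 2 * α / ‖Matrix.toEuclideanCLM (𝕜 := ℝ) E‖ := by
  set TX := Matrix.toEuclideanCLM (𝕜 := ℝ) X with hTX
  set TE := Matrix.toEuclideanCLM (𝕜 := ℝ) E with hTE
  set TY := Matrix.toEuclideanCLM (𝕜 := ℝ) Y with hTY
  have hα : 0 ≤ α := le_trans (norm_nonneg _) hX
  have hYXE : TY = TX + TE := by rw [hTY, hY, map_add]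
  -- ‖E‖ bounds
  have hElb : ‖TY‖ - α ≤ ‖TE‖ := by
    have : ‖TY‖ ≤ ‖TX‖ + ‖TE‖ := hYXE ▸ norm_add_le _ _
    linarith
  have hEub : ‖TE‖ ≤ ‖TY‖ + α := by
    have : TE = TY - TX := by rw [hYXE]; abel
    calc ‖TE‖ = ‖TY - TX‖ := by rw [this]
    _ ≤ ‖TY‖ + ‖TX‖ := norm_sub_le _ _
    _ ≤ ‖TY‖ + α := by linarith
  have hEpos : 0 < ‖TE‖ := by linarith
  -- coordinate formula
  have hcoord : ∀ (A : Matrix (Fin n) (Fin n) ℝ) (x : EuclideanSpace ℝ (Fin n)) (i : Fin n),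
      (Matrix.toEuclideanCLM (𝕜 := ℝ) A x) i = ∑ j, A i j * x j := by
    intro A x i
    have := congrFun (Matrix.ofLp_toEuclideanCLM (n := Fin n) (𝕜 := ℝ) A x) i
    simpa [Matrix.mulVec, dotProduct] using this
  -- inner formula
  have hinner : ∀ x : EuclideanSpace ℝ (Fin n),
      (inner ℝ x (TE x) : ℝ) = ∑ i, ∑ j, x i * (E i j * x j) := by
    intro x
    rw [PiLp.inner_apply]
    refine Finset.sum_congr rfl fun i _ => ?_
    simp [hTE, hcoord, Finset.mul_sum]
    rw [Finset.sum_mul]; exact Finset.sum_congr rfl fun j _ => by ring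
  have hsame : (inner ℝ v (TE v) : ℝ) = inner ℝ vtil (TE vtil) := by
    rw [hinner, hinner]
    refine Finset.sum_congr rfl fun i _ => Finset.sum_congr rfl fun j _ => ?_
    by_cases hE : E i j = 0
    · simp [hE]
    · obtain ⟨hi, hj⟩ := hQ i j hE
      rw [hvtil i, hvtil j, if_pos hi, if_pos hj]
  -- lower bound on |⟪v, TE v⟫|
  have hXin : |(inner ℝ v (TX v) : ℝ)| ≤ α := by
    calc |(inner ℝ v (TX v) : ℝ)| ≤ ‖v‖ * ‖TX v‖ := abs_real_inner_le_norm _ _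
    _ ≤ ‖v‖ * (‖TX‖ * ‖v‖) := by
        exact mul_le_mul_of_nonneg_left (TX.le_opNorm v) (norm_nonneg _)
    _ ≤ α := by rw [hv]; simpa using hX
  have hYin : (inner ℝ v (TY v) : ℝ) = lam := by
    rw [heig, inner_smul_right, real_inner_self_eq_norm_sq, hv]
    ring
  have hEin : (inner ℝ v (TE v) : ℝ) = lam - inner ℝ v (TX v) := by
    have : (inner ℝ v (TY v) : ℝ) = inner ℝ v (TX v) + inner ℝ v (TE v) := by
      rw [hYXE]; simp [inner_add_right]
    linarith [hYin ▸ this]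
  have hlow : ‖TY‖ - α ≤ |(inner ℝ v (TE v) : ℝ)| := by
    rw [hEin]
    have := abs_sub_abs_le_abs_sub lam (inner ℝ v (TX v) : ℝ)
    rw [hlam] at this
    linarith [abs_sub_comm lam ((inner ℝ v (TX v)) : ℝ)]
  have hup : |(inner ℝ vtil (TE vtil) : ℝ)| ≤ ‖TE‖ * ‖vtil‖ ^ 2 := by
    calc |(inner ℝ vtil (TE vtil) : ℝ)| ≤ ‖vtil‖ * ‖TE vtil‖ := abs_real_inner_le_norm _ _
    _ ≤ ‖vtil‖ * (‖TE‖ * ‖vtil‖) := by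
        exact mul_le_mul_of_nonneg_left (TE.le_opNorm vtil) (norm_nonneg _)
    _ = ‖TE‖ * ‖vtil‖ ^ 2 := by ring
  have hchain : ‖TE‖ - 2 * α ≤ ‖TE‖ * ‖vtil‖ ^ 2 := by
    have := hsame ▸ hlow
    linarith
  have key : 2 * α / ‖TE‖ * ‖TE‖ = 2 * α := div_mul_cancel₀ _ (ne_of_gt hEpos)
  constructor
  · nlinarith
  · nlinarith
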